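/- Let F be a finite field with q elements and let e ≥ d ≥ 2 be integers. Then every maximal clique of the bilinear forms graph Bil_q(e×d) has cardinality q^e or q^d, and maximal cliques of both cardinalities exist. -/

import Mathlib

open SimpleGraph

/-- The bilinear forms graph on `e × d` matrices over a field `F`:
two matrices are adjacent iff their difference has rank 1. -/
def bilGraph (F : Type) [Field F] (e d : ℕ) : SimpleGraph (Matrix (Fin e) (Fin d) F) where
  Adj A B := A ≠ B ∧ (A - B).rank = 1
  symm := by
    constructor
    intro A B h
    refine ⟨h.1.symm, ?_⟩
    have hn : B - A = -(A - B) := by abel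
    have hml : (-(A - B)).mulVecLin = -(A - B).mulVecLin := by
      ext v
      simp [Matrix.neg_mulVec]
    have hr : (-(A - B)).rank = (A - B).rank := by
      unfold Matrix.rank
      rw [hml, LinearMap.range_neg]
    rw [hn, hr]
    exact h.2
  loopless := by constructor; intro A h; exact h.1 rfl

/-- `A` is a maximal clique of `Γ`. -/
def IsMaxClique {V : Type} (Γ : SimpleGraph V) (A : Set V) : Prop :=
  Γ.IsClique A ∧ ∀ B : Set V, Γ.IsClique B → A ⊆ B → B = A

section Aux

open Matrix

variable {F : Type} [Field F] {e d : ℕ}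

lemma vmv_mulVec (u : Fin e → F) (v x : Fin d → F) :
    (vecMulVec u v).mulVec x = (v ⬝ᵥ x) • u := by
  ext i
  simp only [Matrix.mulVec, dotProduct, Matrix.vecMulVec_apply, Pi.smul_apply,
    smul_eq_mul, Finset.sum_mul]
  exact Finset.sum_congr rfl (fun j _ => by ring)

lemma vmv_sub_left (u : Fin e → F) (w w' : Fin d → F) :
    vecMulVec u w - vecMulVec u w' = vecMulVec u (w - w') := by
  ext i j; simp [Matrix.vecMulVec_apply, mul_sub]

lemma vmv_sub_right (w w' : Fin e → F) (v : Fin d → F) :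
    vecMulVec w v - vecMulVec w' v = vecMulVec (w - w') v := by
  ext i j; simp [Matrix.vecMulVec_apply, sub_mul]

lemma vmv_smul (c : F) (u : Fin e → F) (v : Fin d → F) :
    vecMulVec (c • u) v = vecMulVec u (c • v) := by
  ext i j; simp [Matrix.vecMulVec_apply]; ring

lemma vmv_zero_left (v : Fin d → F) : vecMulVec (0 : Fin e → F) v = 0 := by
  ext i j; simp [Matrix.vecMulVec_apply]

lemma vmv_zero_right (u : Fin e → F) : vecMulVec u (0 : Fin d → F) = 0 := by
  ext i j; simp [Matrix.vecMulVec_apply]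

lemma single_ne_zero' {n : ℕ} (i : Fin n) : (Pi.single i 1 : Fin n → F) ≠ 0 := by
  intro h
  have := congrFun h i
  simp at this

lemma rank_vmv (u : Fin e → F) (v : Fin d → F) (hu : u ≠ 0) (hv : v ≠ 0) :
    (vecMulVec u v).rank = 1 := by
  classical
  have hrange : LinearMap.range (vecMulVec u v).mulVecLin = Submodule.span F {u} := by
    apply le_antisymm
    · rintro y ⟨x, rfl⟩
      rw [Matrix.mulVecLin_apply, vmv_mulVec]
      exact Submodule.smul_mem _ _ (Submodule.mem_span_singleton_self u)
    · rw [Submodule.span_singleton_le_iff_mem]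
      obtain ⟨j, hj⟩ := Function.ne_iff.mp hv
      rw [Pi.zero_apply] at hj
      refine ⟨(v j)⁻¹ • (Pi.single j 1 : Fin d → F), ?_⟩
      rw [Matrix.mulVecLin_apply, vmv_mulVec]
      have : v ⬝ᵥ ((v j)⁻¹ • (Pi.single j 1 : Fin d → F)) = 1 := by
        simp only [dotProduct, Pi.smul_apply, Pi.single_apply, smul_eq_mul]
        rw [Finset.sum_eq_single j]
        · simp [hj]
        · intro k _ hk; simp [hk]
        · simp
      rw [this, one_smul]
  rw [Matrix.rank, hrange, finrank_span_singleton hu]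

lemma rank_one_decomp (M : Matrix (Fin e) (Fin d) F) (h : M.rank = 1) :
    ∃ u v, u ≠ 0 ∧ v ≠ 0 ∧ M = vecMulVec u v := by
  classical
  rw [Matrix.rank] at h
  obtain ⟨y, hy0, hspan⟩ := finrank_eq_one_iff'.mp h
  set u : Fin e → F := (y : Fin e → F) with hu_def
  have hu : u ≠ 0 := by
    intro h'
    apply hy0
    exact Subtype.ext h'
  have hcol : ∀ j : Fin d, ∃ c : F, c • u = M.mulVec (Pi.single j 1) := by
    intro j
    obtain ⟨c, hc⟩ := hspan ⟨M.mulVec (Pi.single j 1), ⟨Pi.single j 1, rfl⟩⟩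
    exact ⟨c, congrArg Subtype.val hc⟩
  choose c hc using hcol
  have hM : M = vecMulVec u c := by
    ext i j
    have := congrFun (hc j) i
    simp only [Pi.smul_apply, smul_eq_mul] at this
    have hmv : M.mulVec (Pi.single j 1) i = M i j := by
      simp [Matrix.mulVec, dotProduct, Pi.single_apply]
    rw [hmv] at this
    rw [Matrix.vecMulVec_apply, ← this, mul_comm]
  refine ⟨u, c, hu, ?_, hM⟩
  intro hc0
  rw [hc0, vmv_zero_right] at hM
  rw [← Matrix.rank] at h
  rw [hM, Matrix.rank_zero] at h
  exact one_ne_zero h.symm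

lemma lemA {u₁ u₂ : Fin e → F} {v₁ v₂ : Fin d → F}
    (hu₁ : u₁ ≠ 0) (hv₁ : v₁ ≠ 0) (hu₂ : u₂ ≠ 0) (hv₂ : v₂ ≠ 0)
    (h : (vecMulVec u₁ v₁ - vecMulVec u₂ v₂).rank ≤ 1) :
    (∃ c : F, u₂ = c • u₁) ∨ (∃ c : F, v₂ = c • v₁) := by
  classical
  by_contra hcon
  push_neg at hcon
  obtain ⟨h1, h2⟩ := hcon
  set M := vecMulVec u₁ v₁ - vecMulVec u₂ v₂ with hMdef
  -- v₂, v₁ linearly independent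
  have hVind : LinearIndependent F ![v₂, v₁] := by
    rw [linearIndependent_fin2]
    refine ⟨by simpa using hv₁, fun a ha => ?_⟩
    simp only [Matrix.cons_val_one, Matrix.head_cons, Matrix.cons_val_zero] at ha
    exact h2 a ha.symm
  -- the 2×d matrix with rows v₂, v₁ has surjective mulVecLin
  set B : Matrix (Fin 2) (Fin d) F := Matrix.of ![v₂, v₁] with hBdef
  have hBrank : B.rank = 2 := by
    have := hVind.rank_matrix (M := B)
    simpa using this
  have hsurj : Function.Surjective B.mulVecLin := by
    rw [← LinearMap.range_eq_top]
    apply Submodule.eq_top_of_finrank_eq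
    rw [← Matrix.rank, hBrank, Module.finrank_fintype_fun_eq_card]
    simp
  obtain ⟨x, hx⟩ := hsurj (Pi.single 0 1)
  obtain ⟨y, hy⟩ := hsurj (Pi.single 1 1)
  rw [Matrix.mulVecLin_apply] at hx hy
  have hx2 : v₂ ⬝ᵥ x = 1 := by
    have := congrFun hx 0
    simpa [Matrix.mulVec, hBdef] using this
  have hx1 : v₁ ⬝ᵥ x = 0 := by
    have := congrFun hx 1
    simpa [Matrix.mulVec, hBdef] using this
  have hy2 : v₂ ⬝ᵥ y = 0 := by
    have := congrFun hy 0
    simpa [Matrix.mulVec, hBdef] using this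
  have hy1 : v₁ ⬝ᵥ y = 1 := by
    have := congrFun hy 1
    simpa [Matrix.mulVec, hBdef] using this
  have hMx : M.mulVec x = -u₂ := by
    rw [hMdef, Matrix.sub_mulVec, vmv_mulVec, vmv_mulVec, hx1, hx2]
    simp
  have hMy : M.mulVec y = u₁ := by
    rw [hMdef, Matrix.sub_mulVec, vmv_mulVec, vmv_mulVec, hy1, hy2]
    simp
  -- u₁ and -u₂ are independent and lie in the range
  have hUind : LinearIndependent F ![-u₂, u₁] := by
    rw [linearIndependent_fin2]
    refine ⟨hu₁, fun a ha => ?_⟩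
    simp only [Matrix.cons_val_one, Matrix.head_cons, Matrix.cons_val_zero] at ha
    have ha' : u₂ = (-a) • u₁ := by
      rw [neg_smul, ha]; ring_nf
    exact h1 (-a) ha'
  have hsp : Submodule.span F (Set.range ![-u₂, u₁]) ≤ LinearMap.range M.mulVecLin := by
    rw [Submodule.span_le]
    rintro z ⟨i, rfl⟩
    fin_cases i
    · exact ⟨x, by rw [Matrix.mulVecLin_apply, hMx]; simp⟩
    · exact ⟨y, by rw [Matrix.mulVecLin_apply, hMy]; simp⟩
  have h2le : 2 ≤ M.rank := by
    have hmono := Submodule.finrank_mono hsp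
    have hcard := linearIndependent_iff_card_eq_finrank_span.mp hUind
    simp only [Fintype.card_fin, Set.finrank] at hcard
    rw [← hcard] at hmono
    exact hmono
  omega

/-- the "row type" clique: fixed column vector u, all u * wᵀ -/
def Rclq (u : Fin e → F) : Set (Matrix (Fin e) (Fin d) F) :=
  Set.range fun w : Fin d → F => vecMulVec u w

def Cclq (v : Fin d → F) : Set (Matrix (Fin e) (Fin d) F) :=
  Set.range fun w : Fin e → F => vecMulVec w v

lemma vmv_inj_left {u : Fin e → F} (hu : u ≠ 0) {w w' : Fin d → F}
    (h : vecMulVec u w = vecMulVec u w') : w = w' := by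
  obtain ⟨i, hi⟩ := Function.ne_iff.mp hu
  rw [Pi.zero_apply] at hi
  funext j
  have := congrFun (congrFun h i) j
  simp only [Matrix.vecMulVec_apply] at this
  exact mul_left_cancel₀ hi this

lemma vmv_inj_right {v : Fin d → F} (hv : v ≠ 0) {w w' : Fin e → F}
    (h : vecMulVec w v = vecMulVec w' v) : w = w' := by
  obtain ⟨j, hj⟩ := Function.ne_iff.mp hv
  rw [Pi.zero_apply] at hj
  funext i
  have := congrFun (congrFun h i) j
  simp only [Matrix.vecMulVec_apply] at this
  exact mul_right_cancel₀ hj this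

lemma zero_mem_Rclq (u : Fin e → F) : (0 : Matrix (Fin e) (Fin d) F) ∈ Rclq u :=
  ⟨0, vmv_zero_right u⟩

lemma zero_mem_Cclq (v : Fin d → F) : (0 : Matrix (Fin e) (Fin d) F) ∈ Cclq v :=
  ⟨0, vmv_zero_left v⟩

lemma Rclq_clique {u : Fin e → F} (hu : u ≠ 0) :
    (bilGraph F e d).IsClique (Rclq u) := by
  rintro x ⟨w, rfl⟩ y ⟨w', rfl⟩ hxy
  have hww : w ≠ w' := fun h => hxy (by rw [h])
  refine ⟨hxy, ?_⟩
  rw [vmv_sub_left]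
  exact rank_vmv u (w - w') hu (sub_ne_zero.mpr hww)

lemma Cclq_clique {v : Fin d → F} (hv : v ≠ 0) :
    (bilGraph F e d).IsClique (Cclq v) := by
  rintro x ⟨w, rfl⟩ y ⟨w', rfl⟩ hxy
  have hww : w ≠ w' := fun h => hxy (by rw [h])
  refine ⟨hxy, ?_⟩
  rw [vmv_sub_right]
  exact rank_vmv (w - w') v (sub_ne_zero.mpr hww) hv

lemma Rclq_ncard [Fintype F] {u : Fin e → F} (hu : u ≠ 0) :
    (Rclq u : Set (Matrix (Fin e) (Fin d) F)).ncard = Fintype.card F ^ d := by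
  classical
  have hinj : Function.Injective fun w : Fin d → F => vecMulVec u w :=
    fun w w' h => vmv_inj_left hu h
  rw [Rclq, ← Set.image_univ, Set.ncard_image_of_injective _ hinj, Set.ncard_univ,
    Nat.card_eq_fintype_card, Fintype.card_fun, Fintype.card_fin]

lemma Cclq_ncard [Fintype F] {v : Fin d → F} (hv : v ≠ 0) :
    (Cclq v : Set (Matrix (Fin e) (Fin d) F)).ncard = Fintype.card F ^ e := by
  classical
  have hinj : Function.Injective fun w : Fin e → F => vecMulVec w v :=
    fun w w' h => vmv_inj_right hv h
  rw [Cclq, ← Set.image_univ, Set.ncard_image_of_injective _ hinj, Set.ncard_univ,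
    Nat.card_eq_fintype_card, Fintype.card_fun, Fintype.card_fin]

lemma Rclq_max {u : Fin e → F} (hu : u ≠ 0) (hd : 2 ≤ d) :
    IsMaxClique (bilGraph F e d) (Rclq u) := by
  classical
  refine ⟨Rclq_clique hu, fun B hB hsub => ?_⟩
  refine Set.Subset.antisymm ?_ hsub
  intro N hN
  by_contra hNR
  have h0B : (0 : Matrix (Fin e) (Fin d) F) ∈ B := hsub (zero_mem_Rclq u)
  have hN0 : N ≠ 0 := fun h => hNR (h ▸ zero_mem_Rclq u)
  have hrk : N.rank = 1 := by
    have := (hB hN h0B hN0).2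
    rwa [sub_zero] at this
  obtain ⟨a, b, ha, hb, rfl⟩ := rank_one_decomp N hrk
  have key : ∀ i : Fin d, ∃ c : F, b = c • (Pi.single i 1 : Fin d → F) := by
    intro i
    have hmem : vecMulVec u (Pi.single i 1) ∈ B := hsub ⟨_, rfl⟩
    have hne : vecMulVec u (Pi.single i 1) ≠ vecMulVec a b := fun h => hNR ⟨_, h⟩
    have hrk2 : (vecMulVec u (Pi.single i 1) - vecMulVec a b).rank ≤ 1 :=
      le_of_eq (hB hmem hN hne).2
    rcases lemA hu (single_ne_zero' i) ha hb hrk2 with ⟨c, hc⟩ | ⟨c, hc⟩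
    · exact absurd ⟨c • b, by show vecMulVec u (c • b) = vecMulVec a b; rw [← vmv_smul, ← hc]⟩ hNR
    · exact ⟨c, hc⟩
  have hi01 : (⟨0, by omega⟩ : Fin d) ≠ ⟨1, by omega⟩ := by
    intro h
    simpa using congrArg Fin.val h
  obtain ⟨c₁, hc₁⟩ := key ⟨0, by omega⟩
  obtain ⟨c₂, hc₂⟩ := key ⟨1, by omega⟩
  apply hb
  have h10 : b ⟨0, by omega⟩ = c₁ := by rw [hc₁]; simp
  have h20 : b ⟨0, by omega⟩ = 0 := by
    rw [hc₂]; simp [Pi.single_apply, hi01]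
  rw [h10] at h20
  rw [hc₁, h20, zero_smul]

lemma Cclq_max {v : Fin d → F} (hv : v ≠ 0) (he : 2 ≤ e) :
    IsMaxClique (bilGraph F e d) (Cclq v) := by
  classical
  refine ⟨Cclq_clique hv, fun B hB hsub => ?_⟩
  refine Set.Subset.antisymm ?_ hsub
  intro N hN
  by_contra hNC
  have h0B : (0 : Matrix (Fin e) (Fin d) F) ∈ B := hsub (zero_mem_Cclq v)
  have hN0 : N ≠ 0 := fun h => hNC (h ▸ zero_mem_Cclq v)
  have hrk : N.rank = 1 := by
    have := (hB hN h0B hN0).2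
    rwa [sub_zero] at this
  obtain ⟨a, b, ha, hb, rfl⟩ := rank_one_decomp N hrk
  have key : ∀ i : Fin e, ∃ c : F, a = c • (Pi.single i 1 : Fin e → F) := by
    intro i
    have hmem : vecMulVec (Pi.single i 1) v ∈ B := hsub ⟨_, rfl⟩
    have hne : vecMulVec (Pi.single i 1) v ≠ vecMulVec a b := fun h => hNC ⟨_, h⟩
    have hrk2 : (vecMulVec (Pi.single i 1) v - vecMulVec a b).rank ≤ 1 :=
      le_of_eq (hB hmem hN hne).2
    rcases lemA (single_ne_zero' i) hv ha hb hrk2 with ⟨c, hc⟩ | ⟨c, hc⟩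
    · exact ⟨c, hc⟩
    · exact absurd ⟨c • a, by show vecMulVec (c • a) v = vecMulVec a b; rw [vmv_smul, ← hc]⟩ hNC
  have hi01 : (⟨0, by omega⟩ : Fin e) ≠ ⟨1, by omega⟩ := by
    intro h
    simpa using congrArg Fin.val h
  obtain ⟨c₁, hc₁⟩ := key ⟨0, by omega⟩
  obtain ⟨c₂, hc₂⟩ := key ⟨1, by omega⟩
  apply ha
  have h10 : a ⟨0, by omega⟩ = c₁ := by rw [hc₁]; simp
  have h20 : a ⟨0, by omega⟩ = 0 := by
    rw [hc₂]; simp [Pi.single_apply, hi01]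
  rw [h10] at h20
  rw [hc₁, h20, zero_smul]

lemma clique_translate {A : Set (Matrix (Fin e) (Fin d) F)} (c : Matrix (Fin e) (Fin d) F)
    (h : (bilGraph F e d).IsClique A) : (bilGraph F e d).IsClique ((fun X => X + c) '' A) := by
  rintro x ⟨X, hX, rfl⟩ y ⟨Y, hY, rfl⟩ hxy
  have hXY : X ≠ Y := fun h' => hxy (by rw [h'])
  obtain ⟨-, hr⟩ := h hX hY hXY
  refine ⟨hxy, ?_⟩
  have hsub : X + c - (Y + c) = X - Y := by abel
  rw [hsub]
  exact hr

lemma maxclique_translate {A : Set (Matrix (Fin e) (Fin d) F)} (c : Matrix (Fin e) (Fin d) F)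
    (h : IsMaxClique (bilGraph F e d) A) :
    IsMaxClique (bilGraph F e d) ((fun X => X + c) '' A) := by
  refine ⟨clique_translate c h.1, fun B hB hsub => ?_⟩
  have hB' := clique_translate (-c) hB
  have hsub' : A ⊆ (fun X => X + (-c)) '' B := by
    intro X hX
    exact ⟨X + c, hsub ⟨X, hX, rfl⟩, by show X + c + -c = X; abel⟩
  have heq := h.2 _ hB' hsub'
  have himg : (fun X => X + c) '' ((fun X => X + (-c)) '' B) = B := by
    ext x
    simp [Set.image_image]
  rw [← himg, heq]

lemma classify {S : Set (Matrix (Fin e) (Fin d) F)} (he : 1 ≤ e)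
    (hS : IsMaxClique (bilGraph F e d) S) (h0 : 0 ∈ S) :
    (∃ u : Fin e → F, u ≠ 0 ∧ S = Rclq u) ∨ (∃ v : Fin d → F, v ≠ 0 ∧ S = Cclq v) := by
  classical
  have hrk1 : ∀ P ∈ S, P ≠ 0 → P.rank = 1 := by
    intro P hP hP0
    have := (hS.1 hP h0 hP0).2
    rwa [sub_zero] at this
  by_cases hex : ∃ M ∈ S, M ≠ 0
  · obtain ⟨M, hM, hM0⟩ := hex
    obtain ⟨u, v, hu, hv, rfl⟩ := rank_one_decomp M (hrk1 M hM hM0)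
    by_cases hsub : S ⊆ Rclq u
    · exact Or.inl ⟨u, hu, (hS.2 _ (Rclq_clique hu) hsub).symm⟩
    · obtain ⟨N, hN, hNR⟩ := Set.not_subset.mp hsub
      have hN0 : N ≠ 0 := fun h => hNR (h ▸ zero_mem_Rclq u)
      obtain ⟨a, b, ha, hb, rfl⟩ := rank_one_decomp N (hrk1 N hN hN0)
      have hMN : vecMulVec u v ≠ vecMulVec a b := fun h => hNR ⟨v, h⟩
      have hadj := hS.1 hM hN hMN
      rcases lemA hu hv ha hb (le_of_eq hadj.2) with ⟨c, hc⟩ | ⟨c, hc⟩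
      · exact absurd ⟨c • b, by show vecMulVec u (c • b) = vecMulVec a b; rw [← vmv_smul, ← hc]⟩ hNR
      · have hc0 : c ≠ 0 := fun h => hb (by rw [hc, h, zero_smul])
        set a' : Fin e → F := c • a with ha'def
        have hNa : vecMulVec a b = vecMulVec a' v := by rw [ha'def, vmv_smul, ← hc]
        have ha'0 : a' ≠ 0 := by
          rw [ha'def]
          intro h
          rcases smul_eq_zero.mp h with h' | h'
          · exact hc0 h'
          · exact ha h'
        have hnotpar : ∀ t : F, a' ≠ t • u := by
          intro t ht
          exact hNR ⟨t • v, by show vecMulVec u (t • v) = vecMulVec a b; rw [← vmv_smul, ← ht]; exact hNa.symm⟩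
        have hsubC : S ⊆ Cclq v := by
          intro P hP
          by_cases hP0 : P = 0
          · rw [hP0]; exact zero_mem_Cclq v
          obtain ⟨p, q, hp, hq, rfl⟩ := rank_one_decomp P (hrk1 P hP hP0)
          by_cases hPM : vecMulVec p q = vecMulVec u v
          · rw [hPM]; exact ⟨u, rfl⟩
          by_cases hPN : vecMulVec p q = vecMulVec a b
          · rw [hPN, hNa]; exact ⟨a', rfl⟩
          have h1 := lemA hu hv hp hq (le_of_eq (hS.1 hM hP (Ne.symm hPM)).2)
          have hr2 : (vecMulVec a' v - vecMulVec p q).rank ≤ 1 := by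
            rw [← hNa]
            exact le_of_eq (hS.1 hN hP (Ne.symm hPN)).2
          have h2 := lemA ha'0 hv hp hq hr2
          rcases h1 with ⟨c₁, hc₁⟩ | ⟨c₁, hc₁⟩
          · rcases h2 with ⟨c₂, hc₂⟩ | ⟨c₂, hc₂⟩
            · exfalso
              have hc₂0 : c₂ ≠ 0 := fun h => hp (by rw [hc₂, h, zero_smul])
              apply hnotpar (c₂⁻¹ * c₁)
              have haa : a' = c₂⁻¹ • p := by
                rw [hc₂, smul_smul, inv_mul_cancel₀ hc₂0, one_smul]
              rw [haa, hc₁, smul_smul]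
            · exact ⟨c₂ • p, by show vecMulVec (c₂ • p) v = vecMulVec p q; rw [vmv_smul, ← hc₂]⟩
          · exact ⟨c₁ • p, by show vecMulVec (c₁ • p) v = vecMulVec p q; rw [vmv_smul, ← hc₁]⟩
        exact Or.inr ⟨v, hv, (hS.2 _ (Cclq_clique hv) hsubC).symm⟩
  · push_neg at hex
    have hu0 : (Pi.single (⟨0, by omega⟩ : Fin e) 1 : Fin e → F) ≠ 0 := single_ne_zero' _
    have hsub : S ⊆ Rclq (Pi.single (⟨0, by omega⟩ : Fin e) 1) := by
      intro P hP
      rw [hex P hP]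
      exact zero_mem_Rclq _
    exact Or.inl ⟨_, hu0, (hS.2 _ (Rclq_clique hu0) hsub).symm⟩

end Aux

/-- In the bilinear forms graph `Bil_q(e × d)` over a finite field with
`q` elements (`e ≥ d ≥ 2`), every maximal clique has cardinality `q^e` or `q^d`, and both
cardinalities occur. -/

theorem bil_maximal_cliques (F : Type) [Field F] [Fintype F] (q : ℕ)
    (hq : Fintype.card F = q) (e d : ℕ) (hd : 2 ≤ d) (hde : d ≤ e) :
    (∀ A : Set (Matrix (Fin e) (Fin d) F), IsMaxClique (bilGraph F e d) A →
      A.ncard = q ^ e ∨ A.ncard = q ^ d) ∧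
    (∃ A : Set (Matrix (Fin e) (Fin d) F), IsMaxClique (bilGraph F e d) A ∧
      A.ncard = q ^ e) ∧
    (∃ A : Set (Matrix (Fin e) (Fin d) F), IsMaxClique (bilGraph F e d) A ∧
      A.ncard = q ^ d) := by
  have he2 : 2 ≤ e := le_trans hd hde
  refine ⟨?_, ?_, ?_⟩
  · intro A hA
    have hne : A.Nonempty := by
      by_contra h
      rw [Set.not_nonempty_iff_eq_empty] at h
      have h1 := hA.2 {0} ((bilGraph F e d).isClique_singleton 0)
        (by rw [h]; exact Set.empty_subset _)
      rw [h] at h1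
      exact absurd h1 (Set.singleton_ne_empty 0)
    obtain ⟨M₀, hM₀⟩ := hne
    set S := (fun X => X + (-M₀)) '' A with hSdef
    have hSmax : IsMaxClique (bilGraph F e d) S := maxclique_translate (-M₀) hA
    have h0S : (0 : Matrix (Fin e) (Fin d) F) ∈ S :=
      ⟨M₀, hM₀, by show M₀ + -M₀ = 0; abel⟩
    have hcard : S.ncard = A.ncard :=
      Set.ncard_image_of_injective _ (add_left_injective (-M₀))
    rcases classify (by omega) hSmax h0S with ⟨u, hu, hSeq⟩ | ⟨v, hv, hSeq⟩
    · right; rw [← hcard, hSeq, Rclq_ncard hu, hq]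
    · left; rw [← hcard, hSeq, Cclq_ncard hv, hq]
  · refine ⟨Cclq (Pi.single (⟨0, by omega⟩ : Fin d) 1),
      Cclq_max (single_ne_zero' _) he2, ?_⟩
    rw [Cclq_ncard (single_ne_zero' _), hq]
  · refine ⟨Rclq (Pi.single (⟨0, by omega⟩ : Fin e) 1),
      Rclq_max (single_ne_zero' _) hd, ?_⟩
    rw [Rclq_ncard (single_ne_zero' _), hq]
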